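/- arXiv:2303.08859 — 2 statements merged into one kernel-verified Lean document; each statement's English description precedes it below -/
import Mathlib

section
/- Diagonal Lyapunov function for Schur-stable nonnegative matrices: Let M ∈ ℝ^{N×N} be a nonnegative matrix with spectral radius ρ(M) < 1. Then there exists a diagonal matrix P ∈ ℝ^{N×N} with strictly positive diagonal entries such that Mᵀ P M − P is negative definite. -/
open Matrix

noncomputable section

/-- Spectral radius of a real square matrix, computed via its complex spectrum. -/
def specRad {N : Type*} [Fintype N] [DecidableEq N] (A : Matrix N N ℝ) : ENNReal :=
  spectralRadius ℂ (A.map Complex.ofReal)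

namespace DLyapAux

open Finset Filter
open scoped ENNReal NNReal

attribute [local instance] Matrix.linftyOpNormedRing Matrix.linftyOpNormedAlgebra
  Matrix.linftyOpNormedAddCommGroup

variable {n : ℕ}

instance : CompleteSpace (Matrix (Fin n) (Fin n) ℂ) :=
  (by infer_instance : CompleteSpace (Fin n → Fin n → ℂ))

lemma pow_entry_nonneg (M : Matrix (Fin n) (Fin n) ℝ) (hM : ∀ i j, 0 ≤ M i j) :
    ∀ k i j, 0 ≤ (M ^ k) i j := by
  intro k
  induction k with
  | zero => intro i j; by_cases h : i = j <;> simp [pow_zero, Matrix.one_apply, h]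
  | succ m ih =>
    intro i j
    rw [pow_succ, Matrix.mul_apply]
    exact Finset.sum_nonneg fun l _ => mul_nonneg (ih i l) (hM l j)

lemma exists_pow_nnnorm_lt (A : Matrix (Fin n) (Fin n) ℂ)
    (h : spectralRadius ℂ A < 1) : ∃ k : ℕ, 0 < k ∧ ‖A ^ k‖₊ < 1 := by
  have htend := spectrum.pow_nnnorm_pow_one_div_tendsto_nhds_spectralRadius A
  have hev : ∀ᶠ k : ℕ in atTop, (‖A ^ k‖₊ : ℝ≥0∞) ^ (1 / (k : ℝ)) < 1 :=
    htend.eventually_lt_const h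
  obtain ⟨k, hk1, hk⟩ := (hev.and (eventually_ge_atTop 1)).exists
  refine ⟨k, hk, ?_⟩
  by_contra hle
  push_neg at hle
  have h1 : (1 : ℝ≥0∞) ≤ (‖A ^ k‖₊ : ℝ≥0∞) := by exact_mod_cast hle
  have : (1 : ℝ≥0∞) ≤ (‖A ^ k‖₊ : ℝ≥0∞) ^ (1 / (k : ℝ)) := by
    calc (1 : ℝ≥0∞) = 1 ^ (1 / (k : ℝ)) := (ENNReal.one_rpow _).symm
    _ ≤ (‖A ^ k‖₊ : ℝ≥0∞) ^ (1 / (k : ℝ)) :=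
      ENNReal.rpow_le_rpow h1 (by positivity)
  exact absurd hk1 (not_lt.mpr this)

lemma exists_pos_mulVec_lt (M : Matrix (Fin n) (Fin n) ℝ)
    (hM : ∀ i j, 0 ≤ M i j) (hρ : specRad M < 1) :
    ∃ x : Fin n → ℝ, (∀ i, 0 < x i) ∧ ∀ i, (M *ᵥ x) i < x i := by
  obtain ⟨k, hkpos, hnorm⟩ := exists_pow_nnnorm_lt (M.map Complex.ofReal) hρ
  have hmap : (M.map Complex.ofReal) ^ k = (M ^ k).map Complex.ofReal := by
    have := map_pow (Complex.ofRealHom.mapMatrix :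
      Matrix (Fin n) (Fin n) ℝ →+* Matrix (Fin n) (Fin n) ℂ) M k
    exact this.symm
  -- row sums of M ^ k are < 1
  have hrow : ∀ i, ∑ j, (M ^ k) i j < 1 := by
    intro i
    have hsum : (∑ j, ‖((M.map Complex.ofReal) ^ k) i j‖₊) ≤ ‖(M.map Complex.ofReal) ^ k‖₊ := by
      rw [Matrix.linfty_opNNNorm_def]
      exact Finset.le_sup (f := fun i => ∑ j, ‖((M.map Complex.ofReal) ^ k) i j‖₊)
        (Finset.mem_univ i)
    have hlt : (∑ j, ‖((M.map Complex.ofReal) ^ k) i j‖₊) < 1 := lt_of_le_of_lt hsum hnorm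
    have hcoe : ((∑ j, ‖((M.map Complex.ofReal) ^ k) i j‖₊ : NNReal) : ℝ)
        = ∑ j, (M ^ k) i j := by
      push_cast
      refine Finset.sum_congr rfl fun j _ => ?_
      rw [hmap]
      simp [Matrix.map_apply, Complex.nnnorm_real, abs_of_nonneg (pow_entry_nonneg M hM k i j)]
    have := (NNReal.coe_lt_coe.mpr hlt)
    rw [hcoe] at this
    simpa using this
  -- the positive vector
  set S : Matrix (Fin n) (Fin n) ℝ := ∑ l ∈ Finset.range k, M ^ l with hS
  set x : Fin n → ℝ := S *ᵥ (fun _ => 1) with hx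
  have hxeval : ∀ i, x i = ∑ l ∈ Finset.range k, ((M ^ l) *ᵥ (fun _ => 1)) i := by
    intro i
    simp only [hx, hS, Matrix.mulVec, dotProduct, mul_one, Matrix.sum_apply]
    exact Finset.sum_comm
  have hterm_nonneg : ∀ l i, 0 ≤ ((M ^ l) *ᵥ (fun _ => 1)) i := by
    intro l i
    simp only [Matrix.mulVec, dotProduct]
    exact Finset.sum_nonneg fun j _ => by
      simpa using mul_nonneg (pow_entry_nonneg M hM l i j) zero_le_one
  have hxpos : ∀ i, 0 < x i := by
    intro i
    have h0 : ((M ^ 0) *ᵥ (fun _ => 1)) i = 1 := by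
      rw [pow_zero, Matrix.one_mulVec]
    have : ((M ^ 0) *ᵥ (fun _ => 1)) i ≤ x i := by
      rw [hxeval i]
      exact Finset.single_le_sum (fun l _ => hterm_nonneg l i)
        (Finset.mem_range.mpr hkpos)
    rw [h0] at this
    linarith
  refine ⟨x, hxpos, ?_⟩
  have hMS : M * S = S + M ^ k - 1 := by
    rw [hS, Finset.mul_sum]
    have h1 : ∑ l ∈ Finset.range k, M * M ^ l = ∑ l ∈ Finset.range k, M ^ (l + 1) := by
      refine Finset.sum_congr rfl fun l _ => ?_
      rw [pow_succ']
    rw [h1]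
    have h2 : ∑ l ∈ Finset.range (k + 1), M ^ l
        = (∑ l ∈ Finset.range k, M ^ (l + 1)) + M ^ 0 := Finset.sum_range_succ' _ _
    have h3 : ∑ l ∈ Finset.range (k + 1), M ^ l
        = (∑ l ∈ Finset.range k, M ^ l) + M ^ k := Finset.sum_range_succ _ _
    have := h2.symm.trans h3
    rw [pow_zero] at this
    linear_combination (norm := abel) this
  intro i
  have : M *ᵥ x = (M * S) *ᵥ (fun _ => 1) := by
    rw [hx, Matrix.mulVec_mulVec]
  rw [this, hMS]
  have expand : ((S + M ^ k - 1) *ᵥ (fun _ => 1)) i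
      = x i + ((M ^ k) *ᵥ (fun _ => 1)) i - 1 := by
    rw [Matrix.sub_mulVec, Matrix.add_mulVec, Matrix.one_mulVec]
    simp [hx]
  rw [expand]
  have : ((M ^ k) *ᵥ (fun _ => 1)) i < 1 := by
    simpa [Matrix.mulVec, dotProduct] using hrow i
  linarith

lemma specRad_transpose (M : Matrix (Fin n) (Fin n) ℝ) : specRad Mᵀ = specRad M := by
  unfold specRad spectralRadius
  have hspec : spectrum ℂ ((Mᵀ).map Complex.ofReal) = spectrum ℂ (M.map Complex.ofReal) := by
    have hmapT : (Mᵀ).map Complex.ofReal = (M.map Complex.ofReal)ᵀ := Matrix.transpose_map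
    rw [hmapT]
    ext μ
    rw [spectrum.mem_iff, spectrum.mem_iff]
    have hdet : (algebraMap ℂ (Matrix (Fin n) (Fin n) ℂ) μ - (M.map Complex.ofReal)ᵀ)
        = (algebraMap ℂ (Matrix (Fin n) (Fin n) ℂ) μ - M.map Complex.ofReal)ᵀ := by
      rw [Matrix.transpose_sub]
      congr 1
      rw [Matrix.algebraMap_eq_diagonal, Matrix.diagonal_transpose]
    rw [hdet, Matrix.isUnit_iff_isUnit_det, Matrix.det_transpose,
      ← Matrix.isUnit_iff_isUnit_det]
  rw [hspec]

end DLyapAux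

/-- **Diagonal Lyapunov function for Schur-stable nonnegative matrices.**
If `M` is a nonnegative matrix with `ρ(M) < 1`, then there is a diagonal matrix `P` with
strictly positive diagonal entries such that `Mᵀ P M − P` is negative definite. -/
theorem diagonal_lyapunov_for_schur_stable_nonneg
    {N : ℕ} (M : Matrix (Fin N) (Fin N) ℝ)
    (hM : ∀ i j, 0 ≤ M i j) (hρ : specRad M < 1) :
    ∃ p : Fin N → ℝ, (∀ i, 0 < p i) ∧
      ∀ z : Fin N → ℝ, z ≠ 0 →
        z ⬝ᵥ ((Mᵀ * Matrix.diagonal p * M - Matrix.diagonal p) *ᵥ z) < 0 := by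
  obtain ⟨x, hxpos, hxlt⟩ := DLyapAux.exists_pos_mulVec_lt M hM hρ
  have hρT : specRad Mᵀ < 1 := by rw [DLyapAux.specRad_transpose]; exact hρ
  obtain ⟨y, hypos, hylt⟩ := DLyapAux.exists_pos_mulVec_lt Mᵀ (fun i j => hM j i) hρT
  set p : Fin N → ℝ := fun i => y i / x i with hp
  have hppos : ∀ i, 0 < p i := fun i => div_pos (hypos i) (hxpos i)
  refine ⟨p, hppos, ?_⟩
  intro z hz
  set w : Fin N → ℝ := fun j => z j ^ 2 / x j with hw
  have hwnonneg : ∀ j, 0 ≤ w j := fun j => div_nonneg (sq_nonneg _) (hxpos j).le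
  -- expand the quadratic form
  have hquad : z ⬝ᵥ ((Mᵀ * Matrix.diagonal p * M - Matrix.diagonal p) *ᵥ z)
      = (∑ i, p i * ((M *ᵥ z) i) ^ 2) - ∑ i, p i * (z i) ^ 2 := by
    rw [Matrix.sub_mulVec, dotProduct_sub]
    congr 1
    · rw [← Matrix.mulVec_mulVec, ← Matrix.mulVec_mulVec,
        Matrix.dotProduct_mulVec z Mᵀ, Matrix.vecMul_transpose]
      simp [Matrix.mulVec_diagonal, dotProduct, mul_comm, sq, mul_assoc, mul_left_comm]
    · simp [Matrix.mulVec_diagonal, dotProduct, mul_comm, sq, mul_assoc, mul_left_comm]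
  rw [hquad, sub_neg]
  -- Cauchy–Schwarz per row
  have hCS : ∀ i, ((M *ᵥ z) i) ^ 2 ≤ (M *ᵥ x) i * (M *ᵥ w) i := by
    intro i
    have := Finset.sum_sq_le_sum_mul_sum_of_sq_eq_mul (Finset.univ : Finset (Fin N))
      (r := fun j => M i j * z j) (f := fun j => M i j * x j)
      (g := fun j => M i j * w j)
      (fun j _ => mul_nonneg (hM i j) (hxpos j).le)
      (fun j _ => mul_nonneg (hM i j) (hwnonneg j))
      (fun j _ => by
        have hxj := (hxpos j).ne'
        rw [hw]
        field_simp)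
    simpa [Matrix.mulVec, dotProduct] using this
  have hMw_nonneg : ∀ i, 0 ≤ (M *ᵥ w) i := by
    intro i
    simp only [Matrix.mulVec, dotProduct]
    exact Finset.sum_nonneg fun j _ => mul_nonneg (hM i j) (hwnonneg j)
  have step1 : (∑ i, p i * ((M *ᵥ z) i) ^ 2)
      ≤ ∑ i, p i * ((M *ᵥ x) i * (M *ᵥ w) i) := by
    refine Finset.sum_le_sum fun i _ => ?_
    exact mul_le_mul_of_nonneg_left (hCS i) (hppos i).le
  have step2 : (∑ i, p i * ((M *ᵥ x) i * (M *ᵥ w) i))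
      ≤ ∑ i, y i * (M *ᵥ w) i := by
    refine Finset.sum_le_sum fun i _ => ?_
    have h1 : p i * ((M *ᵥ x) i * (M *ᵥ w) i) ≤ p i * (x i * (M *ᵥ w) i) := by
      apply mul_le_mul_of_nonneg_left _ (hppos i).le
      exact mul_le_mul_of_nonneg_right (hxlt i).le (hMw_nonneg i)
    have h2 : p i * (x i * (M *ᵥ w) i) = y i * (M *ᵥ w) i := by
      rw [hp]
      field_simp [(hxpos i).ne']
    linarith
  have step3 : (∑ i, y i * (M *ᵥ w) i) = ∑ j, (Mᵀ *ᵥ y) j * w j := by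
    have : y ⬝ᵥ (M *ᵥ w) = (Mᵀ *ᵥ y) ⬝ᵥ w := by
      rw [Matrix.dotProduct_mulVec, Matrix.mulVec_transpose]
    simpa [dotProduct] using this
  have step4 : (∑ j, (Mᵀ *ᵥ y) j * w j) < ∑ j, y j * w j := by
    obtain ⟨j₀, hj₀⟩ : ∃ j, z j ≠ 0 := Function.ne_iff.mp hz
    refine Finset.sum_lt_sum (fun j _ => mul_le_mul_of_nonneg_right (hylt j).le (hwnonneg j))
      ⟨j₀, Finset.mem_univ j₀, ?_⟩
    have hwj : 0 < w j₀ := div_pos (by positivity) (hxpos j₀)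
    exact mul_lt_mul_of_pos_right (hylt j₀) hwj
  have step5 : (∑ j, y j * w j) = ∑ j, p j * (z j) ^ 2 := by
    refine Finset.sum_congr rfl fun j _ => ?_
    rw [hp, hw]
    field_simp [(hxpos j).ne']
  calc (∑ i, p i * ((M *ᵥ z) i) ^ 2)
      ≤ ∑ i, p i * ((M *ᵥ x) i * (M *ᵥ w) i) := step1
    _ ≤ ∑ i, y i * (M *ᵥ w) i := step2
    _ = ∑ j, (Mᵀ *ᵥ y) j * w j := step3
    _ < ∑ j, y j * w j := step4
    _ = ∑ j, p j * (z j) ^ 2 := step5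
end
end

section
/- Uniform power bound for uniformly Schur-stable matrices: Let N ≥ 1, let μ ∈ (0, 1/2), let L > 0, and let M ∈ ℝ^{N×N} satisfy ρ(M) ≤ 1 − 2μ and ‖M‖ ≤ L. Then for every integer P ≥ 0, ‖M^P‖ ≤ ((1 − μ)^{P+1} / μ^N) (1 − μ + L)^{N−1}. In particular, ‖M^P‖ ≤ m₁ p₁^P for all P ≥ 0, where m₁ := ((1 − μ)/μ^N)(1 − μ + L)^{N−1} and p₁ := 1 − μ < 1. -/
open Matrix Polynomial

noncomputable section

/-- Operator norm of a real matrix induced by the Euclidean vector norm. -/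
def opNorm2R {N : Type*} [Fintype N] [DecidableEq N] (A : Matrix N N ℝ) : ℝ :=
  ‖Matrix.toEuclideanCLM (𝕜 := ℝ) A‖

namespace UniformPowerBoundAux

lemma toECLM_apply {N : ℕ} {𝕜 : Type*} [RCLike 𝕜] (A : Matrix (Fin N) (Fin N) 𝕜)
    (x : EuclideanSpace 𝕜 (Fin N)) (i : Fin N) :
    (Matrix.toEuclideanCLM (𝕜 := 𝕜) A x) i = A.mulVec (fun j => x j) i := by
  have := Matrix.ofLp_toEuclideanCLM (𝕜 := 𝕜) A x
  have h2 := congrFun this i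
  simpa [Matrix.toLin'_apply] using h2

lemma euclid_norm_sq {N : ℕ} {𝕜 : Type*} [RCLike 𝕜] (x : EuclideanSpace 𝕜 (Fin N)) :
    ‖x‖ ^ 2 = ∑ i, ‖x i‖ ^ 2 := by
  rw [EuclideanSpace.norm_eq, Real.sq_sqrt]
  positivity

lemma le_of_sq_le_sq' {a b : ℝ} (ha : 0 ≤ a) (hb : 0 ≤ b) (h : a ^ 2 ≤ b ^ 2) : a ≤ b := by
  nlinarith

lemma norm_complexify {N : ℕ} (A : Matrix (Fin N) (Fin N) ℝ) :
    ‖Matrix.toEuclideanCLM (𝕜 := ℂ) (A.map Complex.ofReal)‖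
      = ‖Matrix.toEuclideanCLM (𝕜 := ℝ) A‖ := by
  apply le_antisymm
  · apply ContinuousLinearMap.opNorm_le_bound _ (norm_nonneg _)
    intro x
    set C := ‖Matrix.toEuclideanCLM (𝕜 := ℝ) A‖ with hC
    have hC0 : 0 ≤ C := norm_nonneg _
    set u : EuclideanSpace ℝ (Fin N) := WithLp.toLp 2 (fun i => (x i).re) with hu
    set v : EuclideanSpace ℝ (Fin N) := WithLp.toLp 2 (fun i => (x i).im) with hv
    have hre : ∀ i, ((A.map Complex.ofReal).mulVec (fun j => x j) i).re = A.mulVec (fun j => u j) i := by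
      intro i
      simp [Matrix.mulVec, dotProduct, Complex.re_sum, hu]
    have him : ∀ i, ((A.map Complex.ofReal).mulVec (fun j => x j) i).im = A.mulVec (fun j => v j) i := by
      intro i
      simp [Matrix.mulVec, dotProduct, Complex.im_sum, hv]
    have key : ‖Matrix.toEuclideanCLM (𝕜 := ℂ) (A.map Complex.ofReal) x‖ ^ 2
        ≤ (C * ‖x‖) ^ 2 := by
      rw [euclid_norm_sq]
      have expand : ∀ i, ‖(Matrix.toEuclideanCLM (𝕜 := ℂ) (A.map Complex.ofReal) x) i‖ ^ 2
          = ‖(Matrix.toEuclideanCLM (𝕜 := ℝ) A u) i‖ ^ 2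
            + ‖(Matrix.toEuclideanCLM (𝕜 := ℝ) A v) i‖ ^ 2 := by
        intro i
        rw [toECLM_apply, toECLM_apply, toECLM_apply]
        rw [← hre i, ← him i, Complex.sq_norm, Complex.normSq_apply,
          Real.norm_eq_abs, Real.norm_eq_abs, sq_abs, sq_abs]
        ring
      rw [Finset.sum_congr rfl (fun i _ => expand i), Finset.sum_add_distrib]
      have h1 : ∑ i, ‖(Matrix.toEuclideanCLM (𝕜 := ℝ) A u) i‖ ^ 2 ≤ (C * ‖u‖) ^ 2 := by
        rw [← euclid_norm_sq]
        have := (Matrix.toEuclideanCLM (𝕜 := ℝ) A).le_opNorm u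
        have h0 : (0:ℝ) ≤ ‖Matrix.toEuclideanCLM (𝕜 := ℝ) A u‖ := norm_nonneg _
        nlinarith [norm_nonneg u]
      have h2 : ∑ i, ‖(Matrix.toEuclideanCLM (𝕜 := ℝ) A v) i‖ ^ 2 ≤ (C * ‖v‖) ^ 2 := by
        rw [← euclid_norm_sq]
        have := (Matrix.toEuclideanCLM (𝕜 := ℝ) A).le_opNorm v
        have h0 : (0:ℝ) ≤ ‖Matrix.toEuclideanCLM (𝕜 := ℝ) A v‖ := norm_nonneg _
        nlinarith [norm_nonneg v]
      have hxsq : ‖u‖ ^ 2 + ‖v‖ ^ 2 = ‖x‖ ^ 2 := by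
        rw [euclid_norm_sq, euclid_norm_sq, euclid_norm_sq, ← Finset.sum_add_distrib]
        apply Finset.sum_congr rfl
        intro i _
        rw [Complex.sq_norm, Complex.normSq_apply]
        simp [hu, hv, Real.norm_eq_abs, sq_abs]
        ring
      calc ∑ i, ‖(Matrix.toEuclideanCLM (𝕜 := ℝ) A u) i‖ ^ 2
            + ∑ i, ‖(Matrix.toEuclideanCLM (𝕜 := ℝ) A v) i‖ ^ 2
          ≤ (C * ‖u‖) ^ 2 + (C * ‖v‖) ^ 2 := add_le_add h1 h2
        _ = C ^ 2 * (‖u‖ ^ 2 + ‖v‖ ^ 2) := by ring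
        _ = (C * ‖x‖) ^ 2 := by rw [hxsq]; ring
    exact le_of_sq_le_sq' (norm_nonneg _) (mul_nonneg hC0 (norm_nonneg _)) key
  · apply ContinuousLinearMap.opNorm_le_bound _ (norm_nonneg _)
    intro x
    set xc : EuclideanSpace ℂ (Fin N) := WithLp.toLp 2 (fun i => (x i : ℂ)) with hxc
    have hnx : ‖xc‖ = ‖x‖ := by
      rw [EuclideanSpace.norm_eq, EuclideanSpace.norm_eq]
      congr 1
      apply Finset.sum_congr rfl
      intro i _
      simp [hxc]
    have happ : ∀ i, (Matrix.toEuclideanCLM (𝕜 := ℂ) (A.map Complex.ofReal) xc) i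
        = ((Matrix.toEuclideanCLM (𝕜 := ℝ) A x) i : ℂ) := by
      intro i
      rw [toECLM_apply, toECLM_apply]
      simp [Matrix.mulVec, dotProduct, hxc]
    have hn : ‖Matrix.toEuclideanCLM (𝕜 := ℝ) A x‖
        = ‖Matrix.toEuclideanCLM (𝕜 := ℂ) (A.map Complex.ofReal) xc‖ := by
      rw [EuclideanSpace.norm_eq, EuclideanSpace.norm_eq]
      congr 1
      apply Finset.sum_congr rfl
      intro i _
      rw [happ i]
      simp
    rw [hn]
    calc ‖Matrix.toEuclideanCLM (𝕜 := ℂ) (A.map Complex.ofReal) xc‖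
        ≤ ‖Matrix.toEuclideanCLM (𝕜 := ℂ) (A.map Complex.ofReal)‖ * ‖xc‖ :=
          ContinuousLinearMap.le_opNorm _ _
      _ = ‖Matrix.toEuclideanCLM (𝕜 := ℂ) (A.map Complex.ofReal)‖ * ‖x‖ := by rw [hnx]

/-- Newton-interpolation coefficients: `cco lam P k` is the complete homogeneous symmetric
polynomial `h_{P-k}(lam 0, ..., lam k)`. -/
def cco (lam : ℕ → ℂ) : ℕ → ℕ → ℂ
  | 0, 0 => 1
  | 0, _+1 => 0
  | P+1, 0 => lam 0 * cco lam P 0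
  | P+1, k+1 => cco lam P k + lam (k+1) * cco lam P (k+1)

lemma cco_succ (lam : ℕ → ℂ) (P k : ℕ) :
    cco lam (P+1) k = (if k = 0 then 0 else cco lam P (k-1)) + lam k * cco lam P k := by
  cases k with
  | zero => simp [cco]
  | succ k => simp [cco]

lemma cco_bound {lam : ℕ → ℂ} {ρ : ℝ} (hρ : 0 ≤ ρ) (hlam : ∀ j, ‖lam j‖ ≤ ρ) :
    ∀ P k, ‖cco lam P k‖ ≤ (P.choose k) * ρ ^ (P - k) := by
  intro P
  induction P with
  | zero =>
    intro k
    cases k with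
    | zero => simp [cco]
    | succ k => simp [cco]
  | succ P ih =>
    intro k
    cases k with
    | zero =>
      have h0 := ih 0
      calc ‖cco lam (P+1) 0‖ = ‖lam 0‖ * ‖cco lam P 0‖ := by rw [cco]; exact norm_mul _ _
        _ ≤ ρ * ((P.choose 0) * ρ ^ (P - 0)) := by
            apply mul_le_mul (hlam 0) h0 (norm_nonneg _) hρ
        _ = ((P+1).choose 0) * ρ ^ (P + 1 - 0) := by
            simp [pow_succ]; ring
    | succ k =>
      have h1 := ih k
      have h2 := ih (k+1)
      have step : ‖cco lam (P+1) (k+1)‖ ≤ ‖cco lam P k‖ + ‖lam (k+1)‖ * ‖cco lam P (k+1)‖ := by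
        rw [cco]
        exact (norm_add_le _ _).trans (by rw [norm_mul])
      have hterm2 : ‖lam (k+1)‖ * ‖cco lam P (k+1)‖ ≤ (P.choose (k+1)) * ρ ^ (P - k) := by
        rcases le_or_gt (k+1) P with hkP | hkP
        · have : ρ * ((P.choose (k+1)) * ρ ^ (P - (k+1))) = (P.choose (k+1)) * ρ ^ (P - k) := by
            have : P - k = (P - (k+1)) + 1 := by omega
            rw [this, pow_succ]; ring
          calc ‖lam (k+1)‖ * ‖cco lam P (k+1)‖
              ≤ ρ * ((P.choose (k+1)) * ρ ^ (P - (k+1))) :=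
                mul_le_mul (hlam _) h2 (norm_nonneg _) hρ
            _ = _ := this
        · have hc : P.choose (k+1) = 0 := Nat.choose_eq_zero_of_lt hkP
          have : ‖cco lam P (k+1)‖ ≤ 0 := by simpa [hc] using h2
          have hz : ‖cco lam P (k+1)‖ = 0 := le_antisymm this (norm_nonneg _)
          simp [hz, hc]
      have hterm1 : ‖cco lam P k‖ ≤ (P.choose k) * ρ ^ (P - k) := h1
      have hsub : P + 1 - (k+1) = P - k := by omega
      calc ‖cco lam (P+1) (k+1)‖
          ≤ (P.choose k) * ρ ^ (P - k) + (P.choose (k+1)) * ρ ^ (P - k) :=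
            step.trans (add_le_add hterm1 hterm2)
        _ = ((P+1).choose (k+1)) * ρ ^ (P + 1 - (k+1)) := by
            rw [hsub, Nat.choose_succ_succ]
            push_cast
            ring

variable {n : ℕ}

/-- Partial products of `(M - λ_j • 1)`. -/
def Ee (M' : Matrix (Fin n) (Fin n) ℂ) (l : List ℂ) (k : ℕ) : Matrix (Fin n) (Fin n) ℂ :=
  ((l.take k).map (fun a => M' - a • (1 : Matrix (Fin n) (Fin n) ℂ))).prod

lemma Ee_zero (M' : Matrix (Fin n) (Fin n) ℂ) (l : List ℂ) : Ee M' l 0 = 1 := rfl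

lemma Ee_succ (M' : Matrix (Fin n) (Fin n) ℂ) (l : List ℂ) {k : ℕ} (hk : k < l.length) :
    Ee M' l (k+1) = Ee M' l k * (M' - (l.getD k 0) • 1) := by
  unfold Ee
  rw [List.take_succ]
  have : l[k]? = some (l.getD k 0) := by
    rw [List.getD_eq_getElem _ _ hk]
    exact List.getElem?_eq_getElem hk
  rw [this]
  simp

lemma comm_Ee (M' : Matrix (Fin n) (Fin n) ℂ) (l : List ℂ) (k : ℕ) :
    M' * Ee M' l k = Ee M' l k * M' := by
  unfold Ee
  generalize l.take k = L
  induction L with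
  | nil => simp
  | cons a L ihL =>
    simp only [List.map_cons, List.prod_cons, ← mul_assoc]
    have hcomm : M' * (M' - a • 1) = (M' - a • 1) * M' := by
      simp only [mul_sub, sub_mul, Algebra.smul_def, one_mul, mul_one]
      rw [Algebra.commutes]
    rw [hcomm, mul_assoc, ihL, mul_assoc]

lemma Ee_top (M' : Matrix (Fin n) (Fin n) ℂ) (l : List ℂ) (hlen : l.length = n)
    (hCH : (l.map (fun a => M' - a • (1 : Matrix (Fin n) (Fin n) ℂ))).prod = 0) :
    Ee M' l n = 0 := by
  unfold Ee
  have h : l.take n = l := by rw [← hlen]; exact List.take_length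
  rw [h, hCH]

lemma power_identity (M' : Matrix (Fin n) (Fin n) ℂ) (l : List ℂ) (hlen : l.length = n)
    (hn : 1 ≤ n)
    (hCH : (l.map (fun a => M' - a • (1 : Matrix (Fin n) (Fin n) ℂ))).prod = 0) :
    ∀ P, M' ^ P = ∑ k ∈ Finset.range n, cco (fun j => l.getD j 0) P k • Ee M' l k := by
  set lam : ℕ → ℂ := fun j => l.getD j 0 with hlam
  intro P
  induction P with
  | zero =>
    rw [pow_zero]
    rw [Finset.sum_eq_single 0]
    · simp [cco, Ee_zero]
    · intro k _ hk
      match k, hk with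
      | k+1, _ => simp [cco]
    · intro h
      exact absurd (Finset.mem_range.mpr hn) h
  | succ P ih =>
    rw [pow_succ', ih, Finset.mul_sum]
    have hstep : ∀ k ∈ Finset.range n,
        M' * (cco lam P k • Ee M' l k)
          = cco lam P k • Ee M' l (k+1) + (lam k * cco lam P k) • Ee M' l k := by
      intro k hk
      have hkl : k < l.length := by rw [hlen]; exact Finset.mem_range.mp hk
      have hME : M' * Ee M' l k = Ee M' l (k+1) + lam k • Ee M' l k := by
        rw [comm_Ee, Ee_succ M' l hkl, mul_sub]
        have : Ee M' l k * (lam k • 1) = lam k • Ee M' l k := by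
          rw [mul_smul_comm, mul_one]
        rw [this]
        abel
      rw [mul_smul_comm, hME, smul_add, smul_smul, mul_comm (cco lam P k) (lam k)]
    rw [Finset.sum_congr rfl hstep, Finset.sum_add_distrib]
    set g : ℕ → Matrix (Fin n) (Fin n) ℂ :=
      fun k => (if k = 0 then 0 else cco lam P (k-1)) • Ee M' l k with hg
    have hA : ∑ k ∈ Finset.range n, cco lam P k • Ee M' l (k+1)
        = ∑ k ∈ Finset.range n, g k := by
      have h1 : ∀ k, g (k+1) = cco lam P k • Ee M' l (k+1) := by
        intro k; simp [hg]
      have h2 : ∑ k ∈ Finset.range (n+1), g k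
          = (∑ k ∈ Finset.range n, g (k+1)) + g 0 := Finset.sum_range_succ' g n
      have h3 : ∑ k ∈ Finset.range (n+1), g k
          = (∑ k ∈ Finset.range n, g k) + g n := Finset.sum_range_succ g n
      have hg0 : g 0 = 0 := by simp [hg]
      have hgn : g n = 0 := by
        simp [hg, Ee_top M' l hlen hCH]
      calc ∑ k ∈ Finset.range n, cco lam P k • Ee M' l (k+1)
          = ∑ k ∈ Finset.range n, g (k+1) := by
            exact Finset.sum_congr rfl (fun k _ => (h1 k).symm)
        _ = ∑ k ∈ Finset.range n, g k := by
            have := h2.symm.trans h3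
            rw [hg0, add_zero] at this
            rw [this, hgn, add_zero]
    rw [hA, ← Finset.sum_add_distrib]
    apply Finset.sum_congr rfl
    intro k _
    rw [cco_succ, add_smul, hg]

lemma roots_abs_bound {n : ℕ} (A : Matrix (Fin n) (Fin n) ℂ) [Nonempty (Fin n)] {ρ : ℝ}
    (hρ0 : 0 ≤ ρ)
    (h : spectralRadius ℂ A ≤ ENNReal.ofReal ρ) :
    ∀ a ∈ A.charpoly.roots, ‖a‖ ≤ ρ := by
  intro a ha
  have hroot : A.charpoly.IsRoot a := (Polynomial.mem_roots'.mp ha).2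
  have heval : A.charpoly.eval a = (Matrix.scalar (Fin n) a - A).det := by
    rw [Matrix.charpoly, eval_det, Matrix.matPolyEquiv_charmatrix]
    simp
  have hdet : (Matrix.scalar (Fin n) a - A).det = 0 := by
    rw [← heval]; exact hroot
  have hmem : a ∈ spectrum ℂ A := by
    rw [spectrum.mem_iff]
    intro hu
    have halg : (algebraMap ℂ (Matrix (Fin n) (Fin n) ℂ)) a = Matrix.scalar (Fin n) a := rfl
    rw [halg] at hu
    have := (Matrix.isUnit_iff_isUnit_det _).mp hu
    rw [hdet] at this
    exact not_isUnit_zero this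
  have hle : (‖a‖₊ : ENNReal) ≤ spectralRadius ℂ A := by
    exact le_iSup₂ (f := fun k (_ : k ∈ spectrum ℂ A) => (‖k‖₊ : ENNReal)) a hmem
  have := hle.trans h
  rw [ENNReal.ofReal] at this
  rw [ENNReal.coe_le_coe] at this
  calc ‖a‖ = (‖a‖₊ : ℝ) := rfl
    _ ≤ (ρ.toNNReal : ℝ) := by exact_mod_cast this
    _ = ρ := Real.coe_toNNReal ρ hρ0

lemma Ee_norm {n : ℕ} [Nonempty (Fin n)] (M' : Matrix (Fin n) (Fin n) ℂ) (l : List ℂ)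
    {L ρ : ℝ} (hL : ‖Matrix.toEuclideanCLM (𝕜 := ℂ) (n := Fin n) M'‖ ≤ L) (hρ0 : 0 ≤ ρ) (hL0 : 0 ≤ L)
    (hroots : ∀ a ∈ l, ‖a‖ ≤ ρ) :
    ∀ k, k ≤ l.length → ‖Matrix.toEuclideanCLM (𝕜 := ℂ) (n := Fin n) (Ee M' l k)‖ ≤ (L + ρ) ^ k := by
  intro k
  induction k with
  | zero =>
    intro _
    rw [Ee_zero, _root_.map_one, pow_zero]
    exact le_of_eq norm_one
  | succ k ih =>
    intro hk1
    have hk : k < l.length := hk1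
    rw [Ee_succ M' l hk, _root_.map_mul, pow_succ]
    have hmem : l.getD k 0 ∈ l := by
      rw [List.getD_eq_getElem _ _ hk]
      exact List.getElem_mem _
    have hfac : ‖Matrix.toEuclideanCLM (𝕜 := ℂ) (n := Fin n) (M' - l.getD k 0 • 1)‖ ≤ L + ρ := by
      rw [_root_.map_sub, _root_.map_smul, _root_.map_one]
      calc ‖Matrix.toEuclideanCLM (𝕜 := ℂ) (n := Fin n) M' - l.getD k 0 • (1 : EuclideanSpace ℂ (Fin n) →L[ℂ] EuclideanSpace ℂ (Fin n))‖
          ≤ ‖Matrix.toEuclideanCLM (𝕜 := ℂ) (n := Fin n) M'‖ + ‖l.getD k 0 • (1 : EuclideanSpace ℂ (Fin n) →L[ℂ] EuclideanSpace ℂ (Fin n))‖ :=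
            norm_sub_le _ _
        _ ≤ L + ρ := by
            apply add_le_add hL
            calc ‖l.getD k 0 • (1 : EuclideanSpace ℂ (Fin n) →L[ℂ] EuclideanSpace ℂ (Fin n))‖
                ≤ ‖l.getD k 0‖ * ‖(1 : EuclideanSpace ℂ (Fin n) →L[ℂ] EuclideanSpace ℂ (Fin n))‖ :=
                  ContinuousLinearMap.opNorm_smul_le _ _
              _ = ‖l.getD k 0‖ := by rw [norm_one, mul_one]
              _ ≤ ρ := hroots _ hmem
    calc ‖Matrix.toEuclideanCLM (𝕜 := ℂ) (n := Fin n) (Ee M' l k) * Matrix.toEuclideanCLM (𝕜 := ℂ) (n := Fin n) (M' - l.getD k 0 • 1)‖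
        ≤ ‖Matrix.toEuclideanCLM (𝕜 := ℂ) (n := Fin n) (Ee M' l k)‖ * ‖Matrix.toEuclideanCLM (𝕜 := ℂ) (n := Fin n) (M' - l.getD k 0 • 1)‖ :=
          norm_mul_le _ _
      _ ≤ (L + ρ) ^ k * (L + ρ) :=
          mul_le_mul (ih hk.le) hfac (norm_nonneg _) (pow_nonneg (add_nonneg hL0 hρ0) k)

lemma termA {P : ℕ} {μ ρ : ℝ} (hμ0 : 0 < μ) (hρ0 : 0 ≤ ρ) (hsum : μ + ρ = 1 - μ) :
    ∀ k, (P.choose k : ℝ) * ρ ^ (P - k) ≤ (1 - μ) ^ P / μ ^ k := by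
  intro k
  have h1μ : (0:ℝ) < 1 - μ := by linarith
  rcases le_or_gt k P with hkP | hkP
  · rw [le_div_iff₀ (pow_pos hμ0 k)]
    have expand : (ρ + μ) ^ P
        = ∑ i ∈ Finset.range (P+1), ρ ^ i * μ ^ (P - i) * (P.choose i) := add_pow ρ μ P
    have hterm : ρ ^ (P-k) * μ ^ (P - (P-k)) * (P.choose (P-k))
        ≤ ∑ i ∈ Finset.range (P+1), ρ ^ i * μ ^ (P - i) * (P.choose i) := by
      apply Finset.single_le_sum (f := fun i => ρ ^ i * μ ^ (P - i) * (P.choose i))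
      · intro i _
        positivity
      · exact Finset.mem_range.mpr (by omega)
    have hsub : P - (P - k) = k := by omega
    have hcs : P.choose (P - k) = P.choose k := Nat.choose_symm hkP
    rw [hsub, hcs] at hterm
    calc (P.choose k : ℝ) * ρ ^ (P - k) * μ ^ k
        = ρ ^ (P - k) * μ ^ k * (P.choose k) := by ring
      _ ≤ (ρ + μ) ^ P := by rw [expand]; exact hterm
      _ = (1 - μ) ^ P := by rw [show ρ + μ = 1 - μ by linarith]
  · have hc : P.choose k = 0 := Nat.choose_eq_zero_of_lt hkP
    rw [hc]
    simp only [Nat.cast_zero, zero_mul]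
    exact div_nonneg (pow_nonneg h1μ.le P) (pow_nonneg hμ0.le k)

lemma termB {N : ℕ} (hN : 1 ≤ N) {μ b : ℝ} (hμ0 : 0 ≤ μ) (hb : 0 ≤ b) :
    ∑ k ∈ Finset.range N, μ ^ (N - 1 - k) * b ^ k ≤ (b + μ) ^ (N - 1) := by
  have expand : (b + μ) ^ (N-1)
      = ∑ k ∈ Finset.range ((N-1)+1), b ^ k * μ ^ ((N-1) - k) * ((N-1).choose k) :=
    add_pow b μ (N-1)
  have hr : (N-1)+1 = N := by omega
  rw [expand, hr]
  apply Finset.sum_le_sum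
  intro k hk
  have hkN : k ≤ N - 1 := by have := Finset.mem_range.mp hk; omega
  have hc : (1:ℝ) ≤ ((N-1).choose k : ℝ) := by
    exact_mod_cast Nat.one_le_iff_ne_zero.mpr (Nat.choose_pos hkN).ne'
  calc μ ^ (N-1-k) * b ^ k = b ^ k * μ ^ (N-1-k) * 1 := by ring
    _ ≤ b ^ k * μ ^ (N-1-k) * ((N-1).choose k) := by
        apply mul_le_mul_of_nonneg_left hc (by positivity)
    _ = b ^ k * μ ^ ((N-1) - k) * ((N-1).choose k) := rfl

end UniformPowerBoundAux

open UniformPowerBoundAux in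
/-- **Uniform power bound for uniformly Schur-stable matrices.** -/
theorem uniform_power_bound_schur_stable
    {N : ℕ} (hN : 1 ≤ N) (μ L : ℝ) (hμ0 : 0 < μ) (hμhalf : μ < 1 / 2) (hL : 0 < L)
    (M : Matrix (Fin N) (Fin N) ℝ)
    (hρ : specRad M ≤ ENNReal.ofReal (1 - 2 * μ))
    (hM : opNorm2R M ≤ L) :
    ∀ P : ℕ,
      opNorm2R (M ^ P) ≤ ((1 - μ) ^ (P + 1) / μ ^ N) * (1 - μ + L) ^ (N - 1) ∧
      opNorm2R (M ^ P) ≤ (((1 - μ) / μ ^ N) * (1 - μ + L) ^ (N - 1)) * (1 - μ) ^ P := by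
  intro P
  haveI : Nonempty (Fin N) := Fin.pos_iff_nonempty.mp hN
  set M' : Matrix (Fin N) (Fin N) ℂ := M.map Complex.ofReal with hM'def
  set ρ : ℝ := 1 - 2 * μ with hρdef
  have hρ0 : 0 ≤ ρ := by rw [hρdef]; linarith
  have hL0 : 0 ≤ L := hL.le
  have h1μ : (0:ℝ) < 1 - μ := by linarith
  -- charpoly facts
  have hsplits : M'.charpoly.Splits := IsAlgClosed.splits _
  have hdeg : M'.charpoly.natDegree = N := by
    rw [Matrix.charpoly_natDegree_eq_dim, Fintype.card_fin]
  have hcard : M'.charpoly.roots.card = N := by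
    rw [Polynomial.splits_iff_card_roots.mp hsplits, hdeg]
  set l : List ℂ := M'.charpoly.roots.toList with hldef
  have hlen : l.length = N := by rw [hldef, Multiset.length_toList, hcard]
  have hroots : ∀ a ∈ l, ‖a‖ ≤ ρ := by
    intro a ha
    exact roots_abs_bound M' hρ0 hρ a (Multiset.mem_toList.mp ha)
  -- Cayley-Hamilton in list form
  have hc : M'.charpoly = (l.map (fun a => X - C a)).prod := by
    conv_lhs => rw [hsplits.eq_prod_roots_of_monic
      (Matrix.charpoly_monic M')]
    rw [← Multiset.coe_toList M'.charpoly.roots, Multiset.map_coe, Multiset.prod_coe]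
  have hCH : (l.map (fun a => M' - a • (1 : Matrix (Fin N) (Fin N) ℂ))).prod = 0 := by
    have h0 := Matrix.aeval_self_charpoly M'
    rw [hc, map_list_prod, List.map_map] at h0
    have hfun : (⇑(aeval (R := ℂ) M') ∘ fun (a : ℂ) => X - C a)
        = fun (a : ℂ) => M' - a • (1 : Matrix (Fin N) (Fin N) ℂ) := by
      funext a
      simp [Algebra.algebraMap_eq_smul_one]
    rwa [hfun] at h0
  set lam : ℕ → ℂ := fun j => l.getD j 0 with hlamdef
  have hlam : ∀ j, ‖lam j‖ ≤ ρ := by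
    intro j
    rcases lt_or_ge j l.length with hj | hj
    · apply hroots
      rw [hlamdef]
      simp only
      rw [List.getD_eq_getElem _ _ hj]
      exact List.getElem_mem _
    · rw [hlamdef]
      simp only
      rw [List.getD_eq_default _ _ hj]
      simpa using hρ0
  have hid := power_identity M' l hlen hN hCH P
  have hMnorm : ‖Matrix.toEuclideanCLM (𝕜 := ℂ) (n := Fin N) M'‖ ≤ L := by
    rw [hM'def, norm_complexify]
    exact hM
  have hEnorm := Ee_norm M' l hMnorm hρ0 hL0 hroots
  -- the main norm estimate
  have hpow : opNorm2R (M ^ P) = ‖Matrix.toEuclideanCLM (𝕜 := ℂ) (n := Fin N) (M' ^ P)‖ := by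
    have hmp : M' ^ P = (M ^ P).map Complex.ofReal := by
      rw [hM'def]
      have : ∀ (B : Matrix (Fin N) (Fin N) ℝ), B.map Complex.ofReal
          = Complex.ofRealHom.mapMatrix B := fun B => rfl
      rw [this, this, ← map_pow]
    rw [hmp, norm_complexify]
    rfl
  have hbound1 : ‖Matrix.toEuclideanCLM (𝕜 := ℂ) (n := Fin N) (M' ^ P)‖
      ≤ ∑ k ∈ Finset.range N, ((P.choose k : ℝ) * ρ ^ (P - k)) * (L + ρ) ^ k := by
    rw [hid, map_sum]
    refine (norm_sum_le _ _).trans ?_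
    apply Finset.sum_le_sum
    intro k hk
    have hkN : k ≤ l.length := by rw [hlen]; exact (Finset.mem_range.mp hk).le
    rw [_root_.map_smul]
    calc ‖cco lam P k • Matrix.toEuclideanCLM (𝕜 := ℂ) (n := Fin N) (Ee M' l k)‖
        ≤ ‖cco lam P k‖ * ‖Matrix.toEuclideanCLM (𝕜 := ℂ) (n := Fin N) (Ee M' l k)‖ :=
          ContinuousLinearMap.opNorm_smul_le _ _
      _ ≤ ((P.choose k : ℝ) * ρ ^ (P - k)) * (L + ρ) ^ k := by
          apply mul_le_mul (cco_bound hρ0 hlam P k) (hEnorm k hkN) (norm_nonneg _)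
          positivity
  -- scalar chain
  have hμρ : μ + ρ = 1 - μ := by rw [hρdef]; ring
  have hbound2 : ∑ k ∈ Finset.range N, ((P.choose k : ℝ) * ρ ^ (P - k)) * (L + ρ) ^ k
      ≤ ((1 - μ) ^ (P + 1) / μ ^ N) * (1 - μ + L) ^ (N - 1) := by
    have hLρ : 0 ≤ L + ρ := by linarith
    calc ∑ k ∈ Finset.range N, ((P.choose k : ℝ) * ρ ^ (P - k)) * (L + ρ) ^ k
        ≤ ∑ k ∈ Finset.range N, ((1 - μ) ^ P / μ ^ k) * (L + ρ) ^ k := by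
          apply Finset.sum_le_sum
          intro k _
          exact mul_le_mul_of_nonneg_right (termA hμ0 hρ0 hμρ k) (pow_nonneg hLρ k)
      _ = ((1 - μ) ^ P / μ ^ (N - 1))
            * ∑ k ∈ Finset.range N, μ ^ (N - 1 - k) * (L + ρ) ^ k := by
          rw [Finset.mul_sum]
          apply Finset.sum_congr rfl
          intro k hk
          have hkN : k ≤ N - 1 := by have := Finset.mem_range.mp hk; omega
          have hpowsplit : μ ^ (N - 1) = μ ^ (N - 1 - k) * μ ^ k := by
            rw [← pow_add]
            congr 1
            omega
          have hμk : (μ:ℝ) ^ k ≠ 0 := (pow_pos hμ0 k).ne'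
          have hμN1 : (μ:ℝ) ^ (N-1) ≠ 0 := (pow_pos hμ0 (N-1)).ne'
          field_simp
          rw [hpowsplit]
          ring
      _ ≤ ((1 - μ) ^ P / μ ^ (N - 1)) * ((L + ρ) + μ) ^ (N - 1) := by
          apply mul_le_mul_of_nonneg_left (termB hN hμ0.le hLρ)
          positivity
      _ = ((1 - μ) ^ P * μ / μ ^ N) * (1 - μ + L) ^ (N - 1) := by
          have h1 : (L + ρ) + μ = 1 - μ + L := by rw [hρdef]; ring
          have h2 : (μ:ℝ) ^ N = μ ^ (N - 1) * μ := by
            rw [← pow_succ]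
            congr 1
            omega
          rw [h1, h2]
          have hμN1 : (μ:ℝ) ^ (N-1) ≠ 0 := (pow_pos hμ0 (N-1)).ne'
          field_simp
      _ ≤ ((1 - μ) ^ (P + 1) / μ ^ N) * (1 - μ + L) ^ (N - 1) := by
          have hstep : (1 - μ) ^ P * μ ≤ (1 - μ) ^ (P + 1) := by
            rw [pow_succ]
            exact mul_le_mul_of_nonneg_left (by linarith) (pow_nonneg h1μ.le P)
          apply mul_le_mul_of_nonneg_right _ (pow_nonneg (by linarith) (N-1))
          rw [div_eq_mul_inv, div_eq_mul_inv]
          exact mul_le_mul_of_nonneg_right hstep (by positivity)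
  have main : opNorm2R (M ^ P) ≤ ((1 - μ) ^ (P + 1) / μ ^ N) * (1 - μ + L) ^ (N - 1) := by
    rw [hpow]
    exact hbound1.trans hbound2
  refine ⟨main, ?_⟩
  calc opNorm2R (M ^ P) ≤ ((1 - μ) ^ (P + 1) / μ ^ N) * (1 - μ + L) ^ (N - 1) := main
    _ = (((1 - μ) / μ ^ N) * (1 - μ + L) ^ (N - 1)) * (1 - μ) ^ P := by
        rw [pow_succ]
        ring
end
end
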